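/- Let C be a finite set partitioned into strata {C_ℓ}_{ℓ∈Λ} with weights α_ℓ ≥ 0 summing to 1, and let q : C → ℕ be quotas with ∑_{c∈C_ℓ} q_c = m_ℓ for each ℓ and total ∑_ℓ m_ℓ = m' > 0. Define p(c) = q_c/m'. Suppose |m_ℓ − α_ℓ m'| ≤ 1 for all ℓ and within each stratum every q_c ∈ {⌊m_ℓ/|C_ℓ|⌋, ⌈m_ℓ/|C_ℓ|⌉}. Then 2·TV(p, μ*) ≤ |Λ|/m' + ∑_{ℓ∈Λ} |C_ℓ|/m', where μ* is the multi-scale target μ*({c}) = α_ℓ/|C_ℓ|. -/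

import Mathlib

/-- Explicit finite-budget guarantee for the two-stage allocation: if the level budgets
`m ℓ` match `α ℓ m'` within `1` and within each stratum every quota is `⌊m ℓ/|C_ℓ|⌋` or
`⌈m ℓ/|C_ℓ|⌉`, then `2 TV(p, μ*) ≤ |Λ|/m' + ∑_ℓ |C_ℓ|/m'` for `p(c) = q c / m'`. -/
theorem stmt19 {C Λ : Type*} [Fintype C] [Fintype Λ] [DecidableEq Λ]
    (σ : C → Λ) (hsurj : ∀ ℓ : Λ, ∃ c, σ c = ℓ)
    (α : Λ → ℝ) (hα : ∀ ℓ, 0 ≤ α ℓ) (hαs : ∑ ℓ, α ℓ = 1)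
    (q : C → ℕ) (m : Λ → ℕ) (m' : ℕ) (hm' : 0 < m')
    (hlev : ∀ ℓ, ∑ c ∈ Finset.univ.filter (fun c' => σ c' = ℓ), q c = m ℓ)
    (htot : ∑ ℓ, m ℓ = m')
    (hinter : ∀ ℓ, |(m ℓ : ℝ) - α ℓ * (m' : ℝ)| ≤ 1)
    (hintra : ∀ c, q c = ⌊(m (σ c) : ℝ) /
        ((Finset.univ.filter (fun c' => σ c' = σ c)).card : ℝ)⌋₊ ∨
      q c = ⌈(m (σ c) : ℝ) /
        ((Finset.univ.filter (fun c' => σ c' = σ c)).card : ℝ)⌉₊) :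
    2 * ((1 / 2) * ∑ c, |(q c : ℝ) / (m' : ℝ) -
        α (σ c) / ((Finset.univ.filter (fun c' => σ c' = σ c)).card : ℝ)|) ≤
      (Fintype.card Λ : ℝ) / (m' : ℝ) +
        ∑ ℓ, ((Finset.univ.filter (fun c' => σ c' = ℓ)).card : ℝ) / (m' : ℝ) := by
  have hm'R : (0:ℝ) < (m' : ℝ) := by exact_mod_cast hm'
  -- per-element bound
  have key : ∀ c : C,
      |(q c : ℝ) / (m' : ℝ) -
        α (σ c) / ((Finset.univ.filter (fun c' => σ c' = σ c)).card : ℝ)| ≤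
      1 / (m' : ℝ) +
        1 / (((Finset.univ.filter (fun c' => σ c' = σ c)).card : ℝ) * (m' : ℝ)) := by
    intro c
    set n : ℕ := (Finset.univ.filter (fun c' => σ c' = σ c)).card with hn
    have hnpos : 0 < n := Finset.card_pos.mpr ⟨c, by simp⟩
    have hnR : (0:ℝ) < (n : ℝ) := by exact_mod_cast hnpos
    set x : ℝ := (m (σ c) : ℝ) / (n : ℝ) with hx
    have hx0 : 0 ≤ x := div_nonneg (Nat.cast_nonneg _) hnR.le
    have h1 : |(q c : ℝ) - x| ≤ 1 := by
      rcases hintra c with h | h <;> rw [← hn, ← hx] at h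
      · rw [h]
        have h1 := Nat.floor_le hx0
        have h2 := Nat.lt_floor_add_one x
        rw [abs_le]
        constructor <;> linarith
      · rw [h]
        have h1 := Nat.le_ceil x
        have h2 := Nat.ceil_lt_add_one hx0
        rw [abs_le]
        constructor <;> linarith
    have h2 : |(m (σ c) : ℝ) - α (σ c) * (m' : ℝ)| ≤ 1 := hinter (σ c)
    have hdec : (q c : ℝ) / (m' : ℝ) - α (σ c) / (n : ℝ) =
        ((q c : ℝ) - x) / (m' : ℝ) +
          ((m (σ c) : ℝ) - α (σ c) * (m' : ℝ)) / ((n : ℝ) * (m' : ℝ)) := by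
      field_simp [hx]
      have hnx : (n : ℝ) * x = (m (σ c) : ℝ) := by rw [hx]; field_simp
      linarith
    rw [hdec]
    calc |((q c : ℝ) - x) / (m' : ℝ) +
          ((m (σ c) : ℝ) - α (σ c) * (m' : ℝ)) / ((n : ℝ) * (m' : ℝ))|
        ≤ |((q c : ℝ) - x)| / (m' : ℝ) +
          |((m (σ c) : ℝ) - α (σ c) * (m' : ℝ))| / ((n : ℝ) * (m' : ℝ)) := by
          refine (abs_add_le _ _).trans ?_
          rw [abs_div, abs_div, abs_of_pos hm'R, abs_of_pos (mul_pos hnR hm'R)]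
      _ ≤ 1 / (m' : ℝ) + 1 / ((n : ℝ) * (m' : ℝ)) := by
          gcongr
  -- sum fiberwise
  have hfib : ∑ c, |(q c : ℝ) / (m' : ℝ) -
        α (σ c) / ((Finset.univ.filter (fun c' => σ c' = σ c)).card : ℝ)| ≤
      ∑ c : C, (1 / (m' : ℝ) +
        1 / (((Finset.univ.filter (fun c' => σ c' = σ c)).card : ℝ) * (m' : ℝ))) :=
    Finset.sum_le_sum fun c _ => key c
  have hsplit : ∑ c : C, (1 / (m' : ℝ) +
        1 / (((Finset.univ.filter (fun c' => σ c' = σ c)).card : ℝ) * (m' : ℝ)))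
      = ∑ ℓ : Λ, ∑ c ∈ Finset.univ.filter (fun c' => σ c' = ℓ), (1 / (m' : ℝ) +
        1 / (((Finset.univ.filter (fun c' => σ c' = σ c)).card : ℝ) * (m' : ℝ))) :=
    (Finset.sum_fiberwise_of_maps_to (fun c _ => Finset.mem_univ (σ c)) _).symm
  have hre : ∀ ℓ : Λ, ∑ c ∈ Finset.univ.filter (fun c' => σ c' = ℓ), (1 / (m' : ℝ) +
        1 / (((Finset.univ.filter (fun c' => σ c' = σ c)).card : ℝ) * (m' : ℝ)))
      = ((Finset.univ.filter (fun c' => σ c' = ℓ)).card : ℝ) / (m' : ℝ) + 1 / (m' : ℝ) := by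
    intro ℓ
    set n : ℕ := (Finset.univ.filter (fun c' => σ c' = ℓ)).card with hn
    obtain ⟨c₀, hc₀⟩ := hsurj ℓ
    have hnpos : 0 < n := Finset.card_pos.mpr ⟨c₀, by simp [hc₀]⟩
    have hnR : (0:ℝ) < (n : ℝ) := by exact_mod_cast hnpos
    have heq : ∀ c ∈ Finset.univ.filter (fun c' => σ c' = ℓ),
        (1 / (m' : ℝ) +
          1 / (((Finset.univ.filter (fun c' => σ c' = σ c)).card : ℝ) * (m' : ℝ)))
        = 1 / (m' : ℝ) + 1 / ((n : ℝ) * (m' : ℝ)) := by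
      intro c hc
      rw [Finset.mem_filter] at hc
      rw [hc.2, ← hn]
    rw [Finset.sum_congr rfl heq, Finset.sum_const, ← hn, nsmul_eq_mul]
    field_simp
  have hLHS : 2 * ((1 / 2) * ∑ c, |(q c : ℝ) / (m' : ℝ) -
      α (σ c) / ((Finset.univ.filter (fun c' => σ c' = σ c)).card : ℝ)|)
      = ∑ c, |(q c : ℝ) / (m' : ℝ) -
      α (σ c) / ((Finset.univ.filter (fun c' => σ c' = σ c)).card : ℝ)| := by ring
  rw [hLHS]
  calc ∑ c, |(q c : ℝ) / (m' : ℝ) -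
        α (σ c) / ((Finset.univ.filter (fun c' => σ c' = σ c)).card : ℝ)|
      ≤ ∑ ℓ : Λ, (((Finset.univ.filter (fun c' => σ c' = ℓ)).card : ℝ) / (m' : ℝ)
          + 1 / (m' : ℝ)) := by
        rw [← Finset.sum_congr rfl (fun ℓ _ => hre ℓ), ← hsplit]
        exact hfib
    _ = (Fintype.card Λ : ℝ) / (m' : ℝ) +
        ∑ ℓ, ((Finset.univ.filter (fun c' => σ c' = ℓ)).card : ℝ) / (m' : ℝ) := by
        rw [Finset.sum_add_distrib, Finset.sum_const, nsmul_eq_mul, Finset.card_univ]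
        rw [add_comm, mul_one_div]
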